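/- Let K be an algebraically closed field equipped with a nontrivial multiplicative nonarchimedean rank-one valuation (equivalently, a nonarchimedean multiplicative norm), so that K is a valued/normed field. Then the completion of K with respect to this valuation is again an algebraically closed field. (In particular, ℂ_p, the completion of an algebraic closure of ℚ_p, is algebraically closed.) -/

import Mathlib

open UniformSpace Polynomial Filter
open scoped NNReal

section Helpers

variable {L : Type*} [NormedField L]

lemma norm_multiset_prod (m : Multiset L) : ‖m.prod‖ = (m.map fun x => ‖x‖).prod := by
  induction m using Multiset.induction with
  | empty => simp
  | cons a s ih => simp [norm_mul, ih]

lemma multiset_exists_min (s : Multiset ℝ) (hs : s ≠ 0) : ∃ x ∈ s, ∀ y ∈ s, x ≤ y := by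
  obtain ⟨x, hx, hmin⟩ := s.toFinset.exists_min_image id
    (by simpa [Multiset.toFinset_nonempty] using hs)
  exact ⟨x, Multiset.mem_toFinset.mp hx, fun y hy => hmin y (Multiset.mem_toFinset.mpr hy)⟩

lemma pow_card_le_prod_of_le (s : Multiset ℝ) (x : ℝ) (hx : 0 ≤ x)
    (h : ∀ y ∈ s, x ≤ y) : x ^ s.card ≤ s.prod := by
  induction s using Multiset.induction with
  | empty => simp
  | cons a s ih =>
    have ha : x ≤ a := h a (Multiset.mem_cons_self _ _)
    have hs : x ^ s.card ≤ s.prod := ih fun y hy => h y (Multiset.mem_cons_of_mem hy)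
    calc x ^ (a ::ₘ s).card = x * x ^ s.card := by simp [pow_succ, mul_comm]
    _ ≤ a * s.prod := mul_le_mul ha hs (pow_nonneg hx _) (hx.trans ha)
    _ = (a ::ₘ s).prod := by simp

end Helpers


open UniformSpace Polynomial Filter
open scoped NNReal

section PolyLemmas

variable {L : Type*} [NormedField L] [IsUltrametricDist L]

/-- bound on roots of a monic polynomial with bounded coefficients -/
lemma root_norm_le {q : L[X]} (hq : q.Monic) {B : ℝ} (hB : 1 ≤ B)
    (hc : ∀ i, ‖q.coeff i‖ ≤ B) {x : L} (hx : q.eval x = 0) : ‖x‖ ≤ B := by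
  by_contra hcon
  push_neg at hcon
  have hx1 : (1 : ℝ) < ‖x‖ := lt_of_le_of_lt hB hcon
  set n := q.natDegree with hn
  have hn0 : n ≠ 0 := by
    rintro h
    rw [hq.natDegree_eq_zero.mp h] at hx
    simp at hx
  have heval : q.eval x = ∑ i ∈ Finset.range n, q.coeff i * x ^ i + x ^ n := by
    rw [eval_eq_sum_range, Finset.sum_range_succ, ← hn, hq.coeff_natDegree, one_mul]
  have hkey : ‖x ^ n‖ ≤ B * ‖x‖ ^ (n - 1) := by
    have : x ^ n = -(∑ i ∈ Finset.range n, q.coeff i * x ^ i) := by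
      rw [heval] at hx; linear_combination hx
    rw [this, norm_neg]
    apply IsUltrametricDist.norm_sum_le_of_forall_le_of_nonneg
    · positivity
    · intro i hi
      rw [norm_mul, norm_pow]
      have h1 : ‖x‖ ^ i ≤ ‖x‖ ^ (n - 1) := by
        apply pow_le_pow_right₀ hx1.le
        have := Finset.mem_range.mp hi
        omega
      exact mul_le_mul (hc i) h1 (by positivity) (by linarith)
  have hlt : B * ‖x‖ ^ (n - 1) < ‖x‖ ^ n := by
    have : ‖x‖ ^ n = ‖x‖ * ‖x‖ ^ (n - 1) := by
      rw [← pow_succ']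
      congr 1
      omega
    rw [this]
    exact mul_lt_mul_of_pos_right hcon (by positivity)
  rw [norm_pow] at hkey
  linarith

/-- evaluation of a polynomial with small coefficients at a bounded point is small -/
lemma eval_norm_le {q : L[X]} {N : ℕ} (hN : q.natDegree ≤ N) {δ B : ℝ} (hδ : 0 ≤ δ)
    (hB : 1 ≤ B) (hc : ∀ i, ‖q.coeff i‖ ≤ δ) {a : L} (ha : ‖a‖ ≤ B) :
    ‖q.eval a‖ ≤ δ * B ^ N := by
  rw [eval_eq_sum_range' (lt_of_le_of_lt hN (Nat.lt_succ_self N))]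
  apply IsUltrametricDist.norm_sum_le_of_forall_le_of_nonneg (by positivity)
  intro i hi
  rw [norm_mul, norm_pow]
  have h0 : (0:ℝ) ≤ ‖a‖ := norm_nonneg a
  have h1 : ‖a‖ ^ i ≤ B ^ i := pow_le_pow_left₀ h0 ha i
  have h2 : (B:ℝ) ^ i ≤ B ^ N := pow_le_pow_right₀ hB (by have := Finset.mem_range.mp hi; omega)
  exact mul_le_mul (hc i) (h1.trans h2) (by positivity) hδ

end PolyLemmas


open UniformSpace Polynomial Filter
open scoped NNReal

section CloseRoot

variable {K L : Type*} [Field K] [IsAlgClosed K] [NormedField L] (f : K →+* L)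

lemma exists_close_root {P : K[X]} (hP : P.Monic) (hn : P.natDegree ≠ 0) (a : L) :
    ∃ r : K, P.IsRoot r ∧ ‖a - f r‖ ^ P.natDegree ≤ ‖(P.map f).eval a‖ := by
  have hsplit : P.roots.card = P.natDegree :=
    (splits_iff_card_roots.mp (IsAlgClosed.splits P))
  have hfact : P = (P.roots.map fun r => X - C r).prod := by
    conv_lhs => rw [(IsAlgClosed.splits P).eq_prod_roots_of_monic hP]
  have heval : (P.map f).eval a = (P.roots.map fun r => a - f r).prod := by
    conv_lhs => rw [hfact]
    rw [Polynomial.map_multiset_prod, Multiset.map_map, eval_multiset_prod, Multiset.map_map]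
    congr 1
    apply Multiset.map_congr rfl
    intro r _
    simp
  have hnorm : ‖(P.map f).eval a‖ = (P.roots.map fun r => ‖a - f r‖).prod := by
    rw [heval, norm_multiset_prod, Multiset.map_map]
    rfl
  have hne : P.roots ≠ 0 := by
    intro h
    rw [h] at hsplit
    simp at hsplit
    omega
  have hs0 : (P.roots.map fun r => ‖a - f r‖) ≠ 0 := by
    simpa using hne
  obtain ⟨x, hxmem, hxmin⟩ := multiset_exists_min _ hs0
  obtain ⟨r, hr, rfl⟩ := Multiset.mem_map.mp hxmem
  refine ⟨r, ?_, ?_⟩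
  · exact isRoot_of_mem_roots hr
  · have hcard : (P.roots.map fun r => ‖a - f r‖).card = P.natDegree := by
      rw [Multiset.card_map, hsplit]
    rw [hnorm, ← hcard]
    exact pow_card_le_prod_of_le _ _ (norm_nonneg _) hxmin

end CloseRoot


open UniformSpace Polynomial Filter
open scoped NNReal

section Approx

variable {K L : Type*} [Field K] [NormedField L] (f : K →+* L)

lemma exists_approx (hf : DenseRange f) {p : L[X]} (hp : p.Monic) {δ : ℝ} (hδ : 0 < δ) :
    ∃ Q : K[X], Q.Monic ∧ Q.natDegree = p.natDegree ∧
      ∀ i, ‖(p - Q.map f).coeff i‖ ≤ δ := by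
  set n := p.natDegree with hn
  have hc : ∀ i : ℕ, ∃ a : K, ‖p.coeff i - f a‖ ≤ δ := by
    intro i
    obtain ⟨a, ha⟩ := hf.exists_dist_lt (p.coeff i) hδ
    rw [dist_eq_norm] at ha
    exact ⟨a, ha.le⟩
  choose c hcc using hc
  set R : K[X] := ∑ i ∈ Finset.range n, C (c i) * X ^ i with hR
  have hdegR : R.degree < (n : WithBot ℕ) := by
    apply lt_of_le_of_lt (degree_sum_le _ _)
    rw [Finset.sup_lt_iff (by exact_mod_cast WithBot.bot_lt_coe n)]
    intro i hi
    apply lt_of_le_of_lt (degree_C_mul_X_pow_le _ _)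
    exact_mod_cast Finset.mem_range.mp hi
  set Q : K[X] := X ^ n + R with hQ
  have hQm : Q.Monic := monic_X_pow_add hdegR
  have hQdeg : Q.degree = (n : WithBot ℕ) := by
    rw [hQ, degree_add_eq_left_of_degree_lt (by rwa [degree_X_pow]), degree_X_pow]
  have hQnat : Q.natDegree = n := natDegree_eq_of_degree_eq_some hQdeg
  refine ⟨Q, hQm, hQnat, ?_⟩
  intro i
  rcases lt_trichotomy i n with hin | hin | hin
  · have hQc : Q.coeff i = c i := by
      rw [hQ, coeff_add, coeff_X_pow, if_neg hin.ne, zero_add, hR, finset_sum_coeff]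
      rw [Finset.sum_eq_single i]
      · simp
      · intro j _ hji
        simp [coeff_C_mul, coeff_X_pow, hji, hji.symm]
      · intro h
        exact absurd (Finset.mem_range.mpr hin) h
    rw [coeff_sub, coeff_map, hQc]
    exact hcc i
  · subst hin
    rw [coeff_sub, coeff_map]
    rw [show p.coeff p.natDegree = 1 from hp.coeff_natDegree, show Q.coeff p.natDegree = 1 by
      have := hQm.coeff_natDegree
      rwa [hQnat, hn] at this]
    simp [hδ.le]
  · rw [coeff_sub, coeff_map]
    rw [coeff_eq_zero_of_natDegree_lt (by omega : p.natDegree < i),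
      coeff_eq_zero_of_natDegree_lt (by omega : Q.natDegree < i)]
    simp [hδ.le]

end Approx


open UniformSpace Polynomial Filter
open scoped NNReal

section Main

theorem isAlgClosed_of_denseRange_of_complete {K L : Type*} [Field K] [IsAlgClosed K]
    [NormedField L] [IsUltrametricDist L] [CompleteSpace L]
    (f : K →+* L) (hf : DenseRange f) : IsAlgClosed L := by
  apply IsAlgClosed.of_exists_root
  intro p hmono hirr
  set n := p.natDegree with hn
  have hn0 : n ≠ 0 := hirr.natDegree_pos.ne'
  set B : ℝ := 1 + ∑ i ∈ Finset.range (n + 1), ‖p.coeff i‖ with hB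
  have hsum0 : (0:ℝ) ≤ ∑ i ∈ Finset.range (n + 1), ‖p.coeff i‖ :=
    Finset.sum_nonneg fun _ _ => norm_nonneg _
  have hB1 : 1 ≤ B := by simp only [hB]; linarith
  have hB0 : 0 < B := by linarith
  have hBc : ∀ i, ‖p.coeff i‖ ≤ B - 1 := by
    intro i
    rcases le_or_gt i n with hi | hi
    · have : ‖p.coeff i‖ ≤ ∑ j ∈ Finset.range (n + 1), ‖p.coeff j‖ :=
        Finset.single_le_sum (f := fun j => ‖p.coeff j‖) (fun _ _ => norm_nonneg _)
          (Finset.mem_range.mpr (by omega))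
      simp only [hB]; linarith
    · rw [coeff_eq_zero_of_natDegree_lt hi]
      simp only [hB, norm_zero]; linarith
  set δ : ℕ → ℝ := fun k => (1/2 : ℝ) ^ (n * k) with hδ
  have hδpos : ∀ k, 0 < δ k := fun k => by positivity
  have hδ1 : ∀ k, δ k ≤ 1 := fun k => pow_le_one₀ (by norm_num) (by norm_num)
  have hδmono : ∀ k, δ (k + 1) ≤ δ k := fun k =>
    pow_le_pow_of_le_one (by norm_num) (by norm_num) (Nat.mul_le_mul le_rfl (by omega))
  -- choose approximating polynomials over K
  have hQex : ∀ k : ℕ, ∃ Q : K[X], Q.Monic ∧ Q.natDegree = n ∧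
      ∀ i, ‖(p - Q.map f).coeff i‖ ≤ δ k := fun k => exists_approx f hf hmono (hδpos k)
  choose Q hQm hQd hQc using hQex
  have hQmapm : ∀ k, ((Q k).map f).Monic := fun k => (hQm k).map f
  have hQmapc : ∀ k i, ‖((Q k).map f).coeff i‖ ≤ B := by
    intro k i
    have h1 : ((Q k).map f).coeff i = p.coeff i - (p - (Q k).map f).coeff i := by
      rw [coeff_sub]; ring
    rw [h1]
    calc ‖p.coeff i - (p - (Q k).map f).coeff i‖
        ≤ ‖p.coeff i‖ + ‖(p - (Q k).map f).coeff i‖ := norm_sub_le _ _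
      _ ≤ (B - 1) + 1 := add_le_add (hBc i) ((hQc k i).trans (hδ1 k))
      _ = B := by ring
  have hrootzero : ∀ (k : ℕ) (b : K), (Q k).IsRoot b → ((Q k).map f).eval (f b) = 0 := by
    intro k b hb
    rw [eval_map, eval₂_at_apply, hb.eq_zero, map_zero]
  have hrootbound : ∀ (k : ℕ) (b : K), (Q k).IsRoot b → ‖f b‖ ≤ B := by
    intro k b hb
    exact root_norm_le (hQmapm k) hB1 (hQmapc k) (hrootzero k b hb)
  -- recursive sequence of roots
  obtain ⟨b0, hb0⟩ := IsAlgClosed.exists_root (Q 0)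
    (degree_ne_of_natDegree_ne (by rw [hQd]; exact hn0))
  have hstep : ∀ (k : ℕ) (b : K), ∃ r : K, (Q (k + 1)).IsRoot r ∧
      ‖f b - f r‖ ^ n ≤ ‖((Q (k + 1)).map f).eval (f b)‖ := by
    intro k b
    obtain ⟨r, hr1, hr2⟩ := exists_close_root f (hQm (k + 1))
      (by rw [hQd]; exact hn0) (f b)
    exact ⟨r, hr1, by rwa [hQd] at hr2⟩
  set a : ℕ → K := fun k => Nat.rec b0 (fun k ak => (hstep k ak).choose) k with haa
  have haroot : ∀ k, (Q k).IsRoot (a k) := by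
    intro k
    cases k with
    | zero => exact hb0
    | succ k => exact (hstep k (a k)).choose_spec.1
  have hdistpow : ∀ k, ‖f (a k) - f (a (k + 1))‖ ^ n ≤
      ‖((Q (k + 1)).map f).eval (f (a k))‖ :=
    fun k => (hstep k (a k)).choose_spec.2
  have haB : ∀ k, ‖f (a k)‖ ≤ B := fun k => hrootbound k (a k) (haroot k)
  -- the evaluation of Q_{k+1} at the k-th point is small
  have hQdiffdeg : ∀ j k : ℕ, ((Q j).map f - (Q k).map f).natDegree ≤ n := by
    intro j k
    apply le_trans (natDegree_sub_le _ _)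
    rw [(hQm j).natDegree_map f, (hQm k).natDegree_map f, hQd, hQd]
    omega
  have hevalQ : ∀ k, ‖((Q (k + 1)).map f).eval (f (a k))‖ ≤ (2 * δ k) * B ^ n := by
    intro k
    have h0 : ((Q k).map f).eval (f (a k)) = 0 := hrootzero k (a k) (haroot k)
    have h1 : ((Q (k + 1)).map f).eval (f (a k)) =
        ((Q (k + 1)).map f - (Q k).map f).eval (f (a k)) := by
      rw [eval_sub, h0, sub_zero]
    rw [h1]
    apply eval_norm_le (hQdiffdeg (k + 1) k) (by positivity) hB1 _ (haB k)
    intro i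
    have h2 : ((Q (k + 1)).map f - (Q k).map f).coeff i =
        (p - (Q k).map f).coeff i - (p - (Q (k + 1)).map f).coeff i := by
      simp only [coeff_sub]; ring
    rw [h2]
    calc ‖(p - (Q k).map f).coeff i - (p - (Q (k + 1)).map f).coeff i‖
        ≤ ‖(p - (Q k).map f).coeff i‖ + ‖(p - (Q (k + 1)).map f).coeff i‖ := norm_sub_le _ _
      _ ≤ δ k + δ (k + 1) := add_le_add (hQc k i) (hQc (k + 1) i)
      _ ≤ 2 * δ k := by have := hδmono k; linarith
  -- geometric bound on consecutive distances
  have hdist2 : ∀ k, ‖f (a k) - f (a (k + 1))‖ ≤ (2 * B) * (1/2 : ℝ) ^ k := by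
    intro k
    have hpow : ‖f (a k) - f (a (k + 1))‖ ^ n ≤ ((2 * B) * (1/2 : ℝ) ^ k) ^ n := by
      refine (hdistpow k).trans ((hevalQ k).trans ?_)
      rw [mul_pow, mul_pow, ← pow_mul]
      have h2n : (2:ℝ) ≤ 2 ^ n := le_self_pow₀ one_le_two hn0
      have hBn : (0:ℝ) < B ^ n := by positivity
      have hhalf : ((1:ℝ)/2) ^ (k * n) = (1/2 : ℝ) ^ (n * k) := by rw [mul_comm]
      calc (2 * δ k) * B ^ n = 2 * ((1/2:ℝ) ^ (n * k) * B ^ n) := by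
            simp only [hδ]; ring
        _ ≤ 2 ^ n * ((1/2:ℝ) ^ (n * k) * B ^ n) := by
            apply mul_le_mul_of_nonneg_right h2n; positivity
        _ = 2 ^ n * B ^ n * (1/2:ℝ) ^ (k * n) := by rw [hhalf]; ring
    have h2B : (0:ℝ) ≤ (2 * B) * (1/2 : ℝ) ^ k := by positivity
    exact (pow_le_pow_iff_left₀ (norm_nonneg _) h2B hn0).mp hpow
  -- Cauchy sequence, limit
  have hcauchy : CauchySeq (fun k => f (a k)) := by
    apply cauchySeq_of_le_geometric (1/2 : ℝ) (2 * B) (by norm_num)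
    intro k
    rw [dist_eq_norm]
    exact hdist2 k
  obtain ⟨x, hx⟩ := cauchySeq_tendsto_of_complete hcauchy
  refine ⟨x, ?_⟩
  have hpeval : ∀ k, ‖p.eval (f (a k))‖ ≤ δ k * B ^ n := by
    intro k
    have h0 : ((Q k).map f).eval (f (a k)) = 0 := hrootzero k (a k) (haroot k)
    have h1 : p.eval (f (a k)) = (p - (Q k).map f).eval (f (a k)) := by
      rw [eval_sub, h0, sub_zero]
    rw [h1]
    apply eval_norm_le _ (hδpos k).le hB1 (hQc k) (haB k)
    apply le_trans (natDegree_sub_le _ _)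
    rw [(hQm k).natDegree_map f, hQd]
    omega
  have h1 : Tendsto (fun k => p.eval (f (a k))) atTop (nhds (p.eval x)) :=
    ((p.continuous_aeval).tendsto x).comp hx
  have h2 : Tendsto (fun k => p.eval (f (a k))) atTop (nhds 0) := by
    rw [tendsto_zero_iff_norm_tendsto_zero]
    apply squeeze_zero (fun k => norm_nonneg _) hpeval
    have hδeq : (fun k => δ k * B ^ n) = fun k => (((1/2:ℝ) ^ n) ^ k) * B ^ n := by
      funext k
      simp only [hδ, ← pow_mul]
    rw [hδeq]
    have := (tendsto_pow_atTop_nhds_zero_of_lt_one (by positivity : (0:ℝ) ≤ (1/2:ℝ)^n)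
      (pow_lt_one₀ (by norm_num) (by norm_num) hn0)).mul_const (B ^ n)
    simpa using this
  exact tendsto_nhds_unique h1 h2

end Main


open UniformSpace Polynomial Filter
open scoped NNReal

section Final

/-- The completion of an algebraically closed field with respect to a nontrivial
multiplicative nonarchimedean rank-one valuation is again algebraically closed
(e.g. `ℂ_p` is algebraically closed). -/
theorem isAlgClosed_completion
    (K : Type*) [Field K] [Valued K NNReal] [IsAlgClosed K]
    (hnt : ∃ x : K, Valued.v x ≠ 0 ∧ Valued.v x ≠ 1) :
    IsAlgClosed (Completion K) := by
  letI : Valuation.RankOne (Valued.v : Valuation (Completion K) ℝ≥0) :=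
    { hom' := MonoidWithZeroHom.ValueGroup₀.embedding
      strictMono' := MonoidWithZeroHom.ValueGroup₀.embedding_strictMono
      exists_val_nontrivial := by
        obtain ⟨x, h0, h1⟩ := hnt
        exact ⟨(x : Completion K), by rwa [Valued.valuedCompletion_apply],
          by rwa [Valued.valuedCompletion_apply]⟩ }
  letI : NormedField (Completion K) := Valued.toNormedField (Completion K) ℝ≥0
  haveI : IsUltrametricDist (Completion K) :=
    IsUltrametricDist.isUltrametricDist_of_forall_norm_add_le_max_norm
      (Valued.isNonarchimedean_norm (Completion K) ℝ≥0)
  haveI : CompleteSpace (Completion K) := Completion.completeSpace K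
  have hdr : DenseRange ((Completion.coeRingHom : K →+* Completion K)) :=
    Completion.denseRange_coe
  exact isAlgClosed_of_denseRange_of_complete Completion.coeRingHom hdr

end Final
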